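/- Let (G, v₀) be a multiplayer quantitative reachability game, Γ = 2·|Π|·|V|, and d = Γ + 3·|V|. If there exists a goal-optimal and dev-optimal secure equilibrium in the truncated game 𝒯^d, then there exists a finite-memory secure equilibrium in (G, v₀) with the same cost profile. -/
import Mathlib


open scoped Classical ENat

/-- A multiplayer quantitative reachability game: a finite directed graph whose
vertices are partitioned among the players (via `owner`), every vertex has an
outgoing edge, and each player `i` has a nonempty goal set `F i`. -/
structure QRGame (ι V : Type) where
  owner : V → ι
  E : V → V → Prop
  total : ∀ v, ∃ w, E v w
  F : ι → Set V
  F_ne : ∀ i, (F i).Nonempty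

namespace QRGame

variable {ι V : Type}

/-- Histories are encoded as *reversed* nonempty lists: the head is the current
vertex, the last element is the initial vertex `v₀`, and consecutive elements
are joined by edges of the graph. -/
def IsHist (G : QRGame ι V) (v₀ : V) : List V → Prop
  | [] => False
  | [v] => v = v₀
  | v :: w :: t => G.E w v ∧ IsHist G v₀ (w :: t)

/-- The current (i.e. most recent) vertex of a history. -/
def cur (v₀ : V) (h : List V) : V := h.headD v₀

/-- `σ` is a valid strategy of player `i`: on every history whose current
vertex belongs to player `i`, it chooses a successor along an edge. -/
def IsStrat (G : QRGame ι V) (v₀ : V) (i : ι) (σ : List V → V) : Prop :=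
  ∀ h : List V, G.IsHist v₀ h → G.owner (cur v₀ h) = i → G.E (cur v₀ h) (σ h)

/-- A strategy profile: one valid strategy for each player. -/
def IsProfile (G : QRGame ι V) (v₀ : V) (σ : ι → List V → V) : Prop :=
  ∀ i, G.IsStrat v₀ i (σ i)

/-- The history reached after `n` further steps when all players follow the
profile `σ` from the history `h` on. -/
def histFrom (G : QRGame ι V) (v₀ : V) (σ : ι → List V → V) (h : List V) : ℕ → List V
  | 0 => h
  | n + 1 =>
      σ (G.owner (cur v₀ (histFrom G v₀ σ h n))) (histFrom G v₀ σ h n)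
        :: histFrom G v₀ σ h n

/-- The full play (indexed from time `0`) whose prefix is the history `h` and
which is consistent with the profile `σ` after `h`. -/
def fullPlay (G : QRGame ι V) (v₀ : V) (σ : ι → List V → V) (h : List V) (t : ℕ) : V :=
  (G.histFrom v₀ σ h t).reverse.getD t v₀

/-- The outcome `⟨(σ_i)⟩_{v₀}` of the profile `σ` from the initial vertex. -/
def outcome (G : QRGame ι V) (v₀ : V) (σ : ι → List V → V) : ℕ → V :=
  G.fullPlay v₀ σ [v₀]

/-- Cost of player `i` for a play `ρ`: the least `l` with `ρ l ∈ F i`,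
and `⊤` (i.e. `+∞`) if there is no such `l`. -/
noncomputable def cost (G : QRGame ι V) (i : ι) (ρ : ℕ → V) : ℕ∞ :=
  ⨅ l ∈ {l : ℕ | ρ l ∈ G.F i}, (l : ℕ∞)

/-- Cost of player `i` for the finite prefix `ρ₀ … ρ_{m-1}` of a play. -/
noncomputable def costLT (G : QRGame ι V) (i : ι) (ρ : ℕ → V) (m : ℕ) : ℕ∞ :=
  ⨅ l ∈ {l : ℕ | l < m ∧ ρ l ∈ G.F i}, (l : ℕ∞)

end QRGame

/-- The preference relation `≺_j` of player `j` on cost profiles: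
`x ≺_j y` iff `x j > y j`, or `x j = y j`, every player's cost does not
decrease, and some player's cost strictly increases. -/
def Prec {ι : Type} (j : ι) (x y : ι → ℕ∞) : Prop :=
  y j < x j ∨ (x j = y j ∧ (∀ i, x i ≤ y i) ∧ ∃ i, x i < y i)

namespace QRGame

variable {ι V : Type} [DecidableEq ι]

/-- `σ` restricted after the history `h` is a secure equilibrium in the subgame
`(G|_h, cur h)`: no player `j` has a `≺_j`-profitable deviation after `h`
(costs are computed on the whole play, including the prefix `h`). -/
def IsSecureAfter (G : QRGame ι V) (v₀ : V) (σ : ι → List V → V) (h : List V) : Prop :=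
  ¬ ∃ (j : ι) (σ' : List V → V), G.IsStrat v₀ j σ' ∧
      Prec j (fun i => G.cost i (G.fullPlay v₀ σ h))
        (fun i => G.cost i (G.fullPlay v₀ (Function.update σ j σ') h))

/-- A secure equilibrium in `(G, v₀)`. -/
def IsSecure (G : QRGame ι V) (v₀ : V) (σ : ι → List V → V) : Prop :=
  G.IsSecureAfter v₀ σ [v₀]

/-- A subgame perfect secure equilibrium: a secure equilibrium in every subgame. -/
def IsSPSE (G : QRGame ι V) (v₀ : V) (σ : ι → List V → V) : Prop :=
  ∀ h : List V, G.IsHist v₀ h → G.IsSecureAfter v₀ σ h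

end QRGame

namespace QRGame

variable {ι V : Type}

/-- A strategy is finite-memory if the equivalence relation identifying two
histories `h`, `h'` whenever `σ` answers the same on `hδ` and `h'δ` for every
continuation `δ` has finite index; equivalently, the map sending a history to
the induced answering function has finite range.  (Histories are reversed
lists, so the continuation `δ` is appended in front.) -/
def FinMem (σ : List V → V) : Prop :=
  (Set.range fun h : List V => fun δ : List V => σ (δ ++ h)).Finite

end QRGame

namespace QRGame

variable {ι V : Type}

/-- `σ` is a valid strategy of player `i` in the truncated game `𝒯^d` played on
the truncation of the unraveling of `G` to depth `d`: it chooses a successor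
along an edge on every history of length (number of edges) `< d`, i.e. on every
history whose list of vertices has length `≤ d`. -/
def IsStratTrunc (G : QRGame ι V) (v₀ : V) (d : ℕ) (i : ι) (σ : List V → V) : Prop :=
  ∀ h : List V, G.IsHist v₀ h → h.length ≤ d →
    G.owner (cur v₀ h) = i → G.E (cur v₀ h) (σ h)

end QRGame

namespace QRGame

variable {ι V : Type} [DecidableEq ι]

/-- `σ` restricted after the history `h` is a secure equilibrium in the subgame
of the truncated game `𝒯^d` after `h`: costs are computed on the prefix of the
play of length `d` (vertices of indices `0, …, d`). -/
def IsSecureTruncAfter (G : QRGame ι V) (v₀ : V) (d : ℕ)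
    (σ : ι → List V → V) (h : List V) : Prop :=
  ¬ ∃ (j : ι) (σ' : List V → V), G.IsStratTrunc v₀ d j σ' ∧
      Prec j (fun i => G.costLT i (G.fullPlay v₀ σ h) (d + 1))
        (fun i => G.costLT i (G.fullPlay v₀ (Function.update σ j σ') h) (d + 1))

/-- A secure equilibrium in the truncated game `𝒯^d`. -/
def IsSecureTrunc (G : QRGame ι V) (v₀ : V) (d : ℕ) (σ : ι → List V → V) : Prop :=
  G.IsSecureTruncAfter v₀ d σ [v₀]

/-- A subgame perfect secure equilibrium in the truncated game `𝒯^d`: a secure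
equilibrium in the subgame after every history of the truncated tree. -/
def IsSPSETrunc (G : QRGame ι V) (v₀ : V) (d : ℕ) (σ : ι → List V → V) : Prop :=
  ∀ h : List V, G.IsHist v₀ h → h.length ≤ d + 1 → G.IsSecureTruncAfter v₀ d σ h

end QRGame

namespace QRGame

variable {ι V : Type} [Fintype V]

/-- Goal-optimality (with bound `Γ`) in the truncated game `𝒯^d`: costs are
computed on the outcome of the truncated game, i.e. on the prefix of length `d`. -/
noncomputable def GoalOptTrunc (G : QRGame ι V) (v₀ : V) (d : ℕ)
    (σ : ι → List V → V) (Γ : ℕ) : Prop :=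
  ∀ i, G.costLT i (G.outcome v₀ σ) (d + 1) ≠ ⊤ →
    G.costLT i (G.outcome v₀ σ) (d + 1) < (Γ : ℕ∞)

/-- The bound `D = max{Cost_i(ρ) : Cost_i(ρ) < +∞} + |V|` attached to the
outcome of a profile in the truncated game `𝒯^d`. -/
noncomputable def devBoundTrunc (G : QRGame ι V) (v₀ : V) (d : ℕ)
    (σ : ι → List V → V) : ℕ :=
  (⨆ i ∈ {i : ι | G.costLT i (G.outcome v₀ σ) (d + 1) ≠ ⊤},
      G.costLT i (G.outcome v₀ σ) (d + 1)).toNat + Fintype.card V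

variable [DecidableEq ι]

/-- Dev-optimality of a secure equilibrium in the truncated game `𝒯^d`. -/
noncomputable def DevOptTrunc (G : QRGame ι V) (v₀ : V) (d : ℕ)
    (σ : ι → List V → V) : Prop :=
  ∀ (j : ι) (σ' : List V → V), G.IsStratTrunc v₀ d j σ' →
    ¬ Prec j
        (fun i => G.costLT i (G.outcome v₀ σ) (G.devBoundTrunc v₀ d σ))
        (fun i => G.costLT i (G.outcome v₀ (Function.update σ j σ'))
          (G.devBoundTrunc v₀ d σ))

end QRGame

namespace SEAux

open QRGame

variable {ι V : Type}

/-! ### Generic list and ENat helpers -/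

lemma list_getD_concat (l : List V) (x d : V) : (l ++ [x]).getD l.length d = x := by
  simp [List.getD_append_right]

lemma headD_eq_getD (h : List V) (hne : h ≠ []) (v₀ : V) :
    h.headD v₀ = h.reverse.getD (h.length - 1) v₀ := by
  cases h with
  | nil => exact absurd rfl hne
  | cons y t =>
    simp only [List.headD_cons, List.reverse_cons, List.length_cons,
      Nat.add_sub_cancel]
    rw [show t.length = t.reverse.length by simp]
    exact (list_getD_concat t.reverse y v₀).symm

lemma list_ext_rev_getD (v₀ : V) (h₁ h₂ : List V) (hlen : h₁.length = h₂.length)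
    (hg : ∀ m < h₁.length, h₁.reverse.getD m v₀ = h₂.reverse.getD m v₀) : h₁ = h₂ := by
  have : h₁.reverse = h₂.reverse := by
    apply List.ext_getElem (by simp [hlen])
    intro n hn1 hn2
    have hn : n < h₁.length := by simpa using hn1
    have := hg n hn
    rwa [List.getD_eq_getElem _ _ hn1, List.getD_eq_getElem _ _ hn2] at this
  simpa using congrArg List.reverse this

lemma biInf_natCast (S : Set ℕ) :
    (⨅ l ∈ S, (l : ℕ∞)) = if h : S.Nonempty then ((sInf S : ℕ) : ℕ∞) else ⊤ := by
  split_ifs with h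
  · refine le_antisymm (biInf_le _ (Nat.sInf_mem h)) ?_
    exact le_iInf₂ fun l hl => by exact_mod_cast Nat.sInf_le hl
  · rw [Set.not_nonempty_iff_eq_empty] at h
    simp [h]

/-! ### Play machinery -/

variable (G : QRGame ι V) (v₀ : V)

lemma histFrom_succ (s : ι → List V → V) (h : List V) (n : ℕ) :
    G.histFrom v₀ s h (n + 1) =
      s (G.owner (cur v₀ (G.histFrom v₀ s h n))) (G.histFrom v₀ s h n)
        :: G.histFrom v₀ s h n := rfl

lemma hist_length (s : ι → List V → V) (n : ℕ) :
    (G.histFrom v₀ s [v₀] n).length = n + 1 := by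
  induction n with
  | zero => rfl
  | succ n ih => rw [histFrom_succ]; simp [ih]

lemma hist_ne_nil (s : ι → List V → V) (n : ℕ) : G.histFrom v₀ s [v₀] n ≠ [] := by
  have := hist_length G v₀ s n
  intro h; rw [h] at this; simp at this

lemma outcome_def (s : ι → List V → V) (n : ℕ) :
    G.outcome v₀ s n = (G.histFrom v₀ s [v₀] n).reverse.getD n v₀ := rfl

lemma outcome_zero (s : ι → List V → V) : G.outcome v₀ s 0 = v₀ := rfl

lemma outcome_getD (s : ι → List V → V) :
    ∀ n, ∀ k ≤ n, (G.histFrom v₀ s [v₀] n).reverse.getD k v₀ = G.outcome v₀ s k := by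
  intro n
  induction n with
  | zero => intro k hk; interval_cases k; rfl
  | succ n ih =>
    intro k hk
    rcases Nat.lt_or_ge k (n + 1) with hk' | hk'
    · rw [histFrom_succ, List.reverse_cons,
        List.getD_append _ _ _ _ (by simp [hist_length]; omega)]
      exact ih k (by omega)
    · have hkk : k = n + 1 := by omega
      subst hkk; rfl

lemma cur_hist (s : ι → List V → V) (n : ℕ) :
    cur v₀ (G.histFrom v₀ s [v₀] n) = G.outcome v₀ s n := by
  unfold cur
  rw [headD_eq_getD _ (hist_ne_nil G v₀ s n) v₀, hist_length]
  simpa using outcome_getD G v₀ s n n le_rfl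

lemma outcome_succ (s : ι → List V → V) (n : ℕ) :
    G.outcome v₀ s (n + 1) =
      s (G.owner (G.outcome v₀ s n)) (G.histFrom v₀ s [v₀] n) := by
  rw [outcome_def, histFrom_succ, List.reverse_cons, cur_hist]
  have : (G.histFrom v₀ s [v₀] n).reverse.length = n + 1 := by simp [hist_length]
  rw [← this]
  exact list_getD_concat _ _ _

lemma hist_congr (s₁ s₂ : ι → List V → V) :
    ∀ n, (∀ k < n, s₁ (G.owner (G.outcome v₀ s₁ k)) (G.histFrom v₀ s₁ [v₀] k)
            = s₂ (G.owner (G.outcome v₀ s₁ k)) (G.histFrom v₀ s₁ [v₀] k)) →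
      G.histFrom v₀ s₁ [v₀] n = G.histFrom v₀ s₂ [v₀] n := by
  intro n
  induction n with
  | zero => intro _; rfl
  | succ n ih =>
    intro hag
    have hn := ih (fun k hk => hag k (by omega))
    rw [histFrom_succ, histFrom_succ, ← hn, cur_hist]
    exact congrArg (· :: _) (hag n (by omega))

lemma outcome_congr (s₁ s₂ : ι → List V → V) (n : ℕ)
    (hag : ∀ k < n, s₁ (G.owner (G.outcome v₀ s₁ k)) (G.histFrom v₀ s₁ [v₀] k)
            = s₂ (G.owner (G.outcome v₀ s₁ k)) (G.histFrom v₀ s₁ [v₀] k)) :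
    ∀ k ≤ n, G.outcome v₀ s₁ k = G.outcome v₀ s₂ k := by
  intro k hk
  rw [outcome_def, outcome_def,
    hist_congr G v₀ s₁ s₂ k (fun m hm => hag m (by omega))]

lemma play_valid (s : ι → List V → V) (m : ℕ)
    (hv : ∀ h, G.IsHist v₀ h → h.length ≤ m →
      G.E (cur v₀ h) (s (G.owner (cur v₀ h)) h)) :
    ∀ n ≤ m, G.IsHist v₀ (G.histFrom v₀ s [v₀] n) ∧
      ∀ k < n, G.E (G.outcome v₀ s k) (G.outcome v₀ s (k + 1)) := by
  intro n
  induction n with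
  | zero => intro _; exact ⟨rfl, by omega⟩
  | succ n ih =>
    intro hn
    obtain ⟨hh, he⟩ := ih (by omega)
    have hedge : G.E (G.outcome v₀ s n) (G.outcome v₀ s (n + 1)) := by
      rw [outcome_succ, ← cur_hist]
      exact hv _ hh (by rw [hist_length]; omega)
    refine ⟨?_, fun k hk => ?_⟩
    · rw [histFrom_succ]
      obtain ⟨w, t, hwt⟩ : ∃ w t, G.histFrom v₀ s [v₀] n = w :: t := by
        cases hq : G.histFrom v₀ s [v₀] n with
        | nil => exact absurd hq (hist_ne_nil G v₀ s n)
        | cons w t => exact ⟨w, t, rfl⟩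
      have hh' : G.IsHist v₀ (w :: t) := hwt ▸ hh
      have hlen : (w :: t).length ≤ m := by
        rw [← hwt, hist_length]; omega
      have hE := hv (w :: t) hh' hlen
      rw [hwt]
      exact ⟨hE, hh'⟩
    · rcases Nat.lt_or_ge k n with h | h
      · exact he k h
      · have : k = n := by omega
        subst this; exact hedge

end SEAux
namespace SEAux

/-! ### Cost lemmas -/

variable {ι V : Type} (G : QRGame ι V)

lemma cost_eq' (i : ι) (ρ : ℕ → V) :
    G.cost i ρ = if h : {l : ℕ | ρ l ∈ G.F i}.Nonempty
      then ((sInf {l : ℕ | ρ l ∈ G.F i} : ℕ) : ℕ∞) else ⊤ :=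
  biInf_natCast _

lemma costLT_eq' (i : ι) (ρ : ℕ → V) (m : ℕ) :
    G.costLT i ρ m = if h : {l : ℕ | l < m ∧ ρ l ∈ G.F i}.Nonempty
      then ((sInf {l : ℕ | l < m ∧ ρ l ∈ G.F i} : ℕ) : ℕ∞) else ⊤ :=
  biInf_natCast _

lemma cost_le_of_mem {i : ι} {ρ : ℕ → V} {l : ℕ} (hl : ρ l ∈ G.F i) :
    G.cost i ρ ≤ l := by
  have hne : {l' : ℕ | ρ l' ∈ G.F i}.Nonempty := ⟨l, hl⟩
  rw [cost_eq', dif_pos hne]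
  exact_mod_cast Nat.sInf_le (show l ∈ {l' : ℕ | ρ l' ∈ G.F i} from hl)

lemma cost_eq_top_iff {i : ι} {ρ : ℕ → V} :
    G.cost i ρ = ⊤ ↔ ∀ l, ρ l ∉ G.F i := by
  rw [cost_eq']
  split_ifs with h
  · simp only [ENat.coe_ne_top, false_iff, not_forall, not_not]
    exact h
  · rw [Set.not_nonempty_iff_eq_empty] at h
    simp only [true_iff]
    intro l hl
    exact absurd (Set.eq_empty_iff_forall_notMem.mp h l) (by simpa using hl)

lemma cost_spec {i : ι} {ρ : ℕ → V} (h : G.cost i ρ ≠ ⊤) :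
    ∃ l : ℕ, G.cost i ρ = (l : ℕ∞) ∧ ρ l ∈ G.F i ∧ ∀ k < l, ρ k ∉ G.F i := by
  have hne : {l : ℕ | ρ l ∈ G.F i}.Nonempty := by
    by_contra hne
    rw [cost_eq', dif_neg hne] at h
    exact h rfl
  rw [cost_eq', dif_pos hne]
  refine ⟨sInf {l : ℕ | ρ l ∈ G.F i}, rfl, Nat.sInf_mem hne, fun k hk hmem => ?_⟩
  have := Nat.sInf_le (s := {l : ℕ | ρ l ∈ G.F i}) hmem
  omega

lemma costLT_le_of_mem {i : ι} {ρ : ℕ → V} {l m : ℕ} (hlm : l < m) (hl : ρ l ∈ G.F i) :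
    G.costLT i ρ m ≤ l := by
  have hne : {l' : ℕ | l' < m ∧ ρ l' ∈ G.F i}.Nonempty := ⟨l, hlm, hl⟩
  rw [costLT_eq', dif_pos hne]
  exact_mod_cast Nat.sInf_le (show l ∈ {l' : ℕ | l' < m ∧ ρ l' ∈ G.F i} from ⟨hlm, hl⟩)

lemma costLT_eq_top_iff {i : ι} {ρ : ℕ → V} {m : ℕ} :
    G.costLT i ρ m = ⊤ ↔ ∀ l < m, ρ l ∉ G.F i := by
  rw [costLT_eq']
  split_ifs with h
  · simp only [ENat.coe_ne_top, false_iff, not_forall]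
    obtain ⟨l, hl1, hl2⟩ := h
    exact ⟨l, hl1, by simpa using hl2⟩
  · rw [Set.not_nonempty_iff_eq_empty, Set.eq_empty_iff_forall_notMem] at h
    simp only [true_iff]
    intro l hl hmem
    exact h l ⟨hl, hmem⟩

lemma costLT_spec {i : ι} {ρ : ℕ → V} {m : ℕ} (h : G.costLT i ρ m ≠ ⊤) :
    ∃ l : ℕ, G.costLT i ρ m = (l : ℕ∞) ∧ l < m ∧ ρ l ∈ G.F i ∧ ∀ k < l, ρ k ∉ G.F i := by
  have hne : {l : ℕ | l < m ∧ ρ l ∈ G.F i}.Nonempty := by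
    by_contra hne
    rw [costLT_eq', dif_neg hne] at h
    exact h rfl
  rw [costLT_eq', dif_pos hne]
  obtain ⟨hlt, hmem⟩ := Nat.sInf_mem hne
  refine ⟨_, rfl, hlt, hmem, fun k hk hkm => ?_⟩
  have := Nat.sInf_le (s := {l : ℕ | l < m ∧ ρ l ∈ G.F i}) ⟨by omega, hkm⟩
  omega

lemma cost_congr {i : ι} {ρ₁ ρ₂ : ℕ → V} (h : ∀ t, ρ₁ t = ρ₂ t) :
    G.cost i ρ₁ = G.cost i ρ₂ := by
  have : ρ₁ = ρ₂ := funext h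
  rw [this]

lemma costLT_congr {i : ι} {ρ₁ ρ₂ : ℕ → V} {m : ℕ} (h : ∀ t < m, ρ₁ t = ρ₂ t) :
    G.costLT i ρ₁ m = G.costLT i ρ₂ m := by
  rw [costLT_eq', costLT_eq']
  have hs : {l : ℕ | l < m ∧ ρ₁ l ∈ G.F i} = {l : ℕ | l < m ∧ ρ₂ l ∈ G.F i} := by
    ext l; simp only [Set.mem_setOf_eq]
    constructor
    · rintro ⟨h1, h2⟩; exact ⟨h1, h l h1 ▸ h2⟩
    · rintro ⟨h1, h2⟩; exact ⟨h1, (h l h1).symm ▸ h2⟩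
  rw [hs]

lemma cost_eq_coe_iff {i : ι} {ρ : ℕ → V} {l : ℕ} :
    G.cost i ρ = (l : ℕ∞) ↔ ρ l ∈ G.F i ∧ ∀ k < l, ρ k ∉ G.F i := by
  constructor
  · intro h
    obtain ⟨l', hl', hmem, hmin⟩ := cost_spec G (by rw [h]; exact ENat.coe_ne_top l)
    rw [h] at hl'
    have : l = l' := by exact_mod_cast hl'
    subst this; exact ⟨hmem, hmin⟩
  · rintro ⟨hmem, hmin⟩
    refine le_antisymm (cost_le_of_mem G hmem) ?_
    by_contra hlt
    push_neg at hlt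
    have hne : G.cost i ρ ≠ ⊤ := fun h => by rw [h] at hlt; exact absurd hlt (by simp)
    obtain ⟨l', hl', hmem', _⟩ := cost_spec G hne
    rw [hl'] at hlt
    exact hmin l' (by exact_mod_cast hlt) hmem'

lemma costLT_eq_coe_iff {i : ι} {ρ : ℕ → V} {m l : ℕ} :
    G.costLT i ρ m = (l : ℕ∞) ↔ l < m ∧ ρ l ∈ G.F i ∧ ∀ k < l, ρ k ∉ G.F i := by
  constructor
  · intro h
    obtain ⟨l', hl', hlt, hmem, hmin⟩ := costLT_spec G (by rw [h]; exact ENat.coe_ne_top l)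
    rw [h] at hl'
    have : l = l' := by exact_mod_cast hl'
    subst this; exact ⟨hlt, hmem, hmin⟩
  · rintro ⟨hlm, hmem, hmin⟩
    refine le_antisymm (costLT_le_of_mem G hlm hmem) ?_
    by_contra hlt
    push_neg at hlt
    have hne : G.costLT i ρ m ≠ ⊤ := fun h => by rw [h] at hlt; exact absurd hlt (by simp)
    obtain ⟨l', hl', _, hmem', _⟩ := costLT_spec G hne
    rw [hl'] at hlt
    exact hmin l' (by exact_mod_cast hlt) hmem'

lemma cost_of_costLT {i : ι} {ρ : ℕ → V} {m l : ℕ} (h : G.costLT i ρ m = (l : ℕ∞)) :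
    G.cost i ρ = (l : ℕ∞) := by
  rw [costLT_eq_coe_iff] at h
  exact cost_eq_coe_iff G |>.mpr ⟨h.2.1, h.2.2⟩

lemma costLT_of_cost {i : ι} {ρ : ℕ → V} {m l : ℕ} (h : G.cost i ρ = (l : ℕ∞))
    (hlm : l < m) : G.costLT i ρ m = (l : ℕ∞) := by
  rw [cost_eq_coe_iff] at h
  exact costLT_eq_coe_iff G |>.mpr ⟨hlm, h.1, h.2⟩

lemma costLT_shrink {i : ι} {ρ : ℕ → V} {m m' l : ℕ} (hmm : m ≤ m')
    (h : G.costLT i ρ m' = (l : ℕ∞)) (hlm : l < m) : G.costLT i ρ m = (l : ℕ∞) := by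
  rw [costLT_eq_coe_iff] at h ⊢
  exact ⟨hlm, h.2.1, h.2.2⟩

lemma costLT_top_of_cost_top {i : ι} {ρ : ℕ → V} {m : ℕ} (h : G.cost i ρ = ⊤) :
    G.costLT i ρ m = ⊤ := by
  rw [cost_eq_top_iff] at h
  exact costLT_eq_top_iff G |>.mpr fun l _ => h l

end SEAux
namespace SEAux

/-! ### Attractors for the auxiliary zero-sum reachability games -/

variable {ι V : Type}

/-- One step of the attractor computation for player `j` trying to reach `F j`. -/
def astep (G : QRGame ι V) (j : ι) (S : Set V) : Set V :=
  S ∪ {v | G.owner v = j ∧ ∃ w, G.E v w ∧ w ∈ S}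
    ∪ {v | G.owner v ≠ j ∧ ∀ w, G.E v w → w ∈ S}

lemma mem_astep {G : QRGame ι V} {j : ι} {S : Set V} {v : V} :
    v ∈ astep G j S ↔ v ∈ S ∨ (G.owner v = j ∧ ∃ w, G.E v w ∧ w ∈ S) ∨
      (G.owner v ≠ j ∧ ∀ w, G.E v w → w ∈ S) := by
  simp [astep, Set.mem_union, Set.mem_setOf_eq, or_assoc]

/-- The `k`-step attractor of `F j` for player `j`. -/
def attr (G : QRGame ι V) (j : ι) : ℕ → Set V
  | 0 => G.F j
  | k + 1 => astep G j (attr G j k)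

/-- The winning region of player `j` in the zero-sum reachability game. -/
def win [Fintype V] (G : QRGame ι V) (j : ι) : Set V := attr G j (Fintype.card V)

lemma attr_succ (G : QRGame ι V) (j : ι) (k : ℕ) :
    attr G j (k + 1) = astep G j (attr G j k) := rfl

lemma attr_subset_succ (G : QRGame ι V) (j : ι) (k : ℕ) :
    attr G j k ⊆ attr G j (k + 1) := fun v hv => by
  rw [attr_succ, mem_astep]; exact Or.inl hv

lemma attr_mono (G : QRGame ι V) (j : ι) {k k' : ℕ} (h : k ≤ k') :
    attr G j k ⊆ attr G j k' := by
  induction k' with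
  | zero => have : k = 0 := by omega
            subst this; exact subset_rfl
  | succ k' ih =>
    rcases Nat.lt_or_ge k (k' + 1) with h' | h'
    · exact (ih (by omega)).trans (attr_subset_succ G j k')
    · have : k = k' + 1 := by omega
      subst this; exact subset_rfl

lemma F_subset_attr (G : QRGame ι V) (j : ι) (k : ℕ) : G.F j ⊆ attr G j k :=
  attr_mono G j (Nat.zero_le k)

lemma F_subset_win [Fintype V] (G : QRGame ι V) (j : ι) : G.F j ⊆ win G j :=
  F_subset_attr G j _

lemma attr_fix_propagate (G : QRGame ι V) (j : ι) {k : ℕ}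
    (h : attr G j (k + 1) = attr G j k) :
    ∀ m, attr G j (k + m) = attr G j k := by
  intro m
  induction m with
  | zero => rfl
  | succ m ih =>
    have : k + (m + 1) = (k + m) + 1 := by omega
    rw [this, attr_succ, ih, ← attr_succ, h]

lemma win_fix [Fintype V] (G : QRGame ι V) (j : ι) :
    astep G j (win G j) = win G j := by
  classical
  by_cases hex : ∃ k < Fintype.card V, attr G j (k + 1) = attr G j k
  · obtain ⟨k, hk, hfix⟩ := hex
    have h1 : win G j = attr G j k := by
      have := attr_fix_propagate G j hfix (Fintype.card V - k)
      rw [show k + (Fintype.card V - k) = Fintype.card V by omega] at this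
      exact this
    have h2 : astep G j (attr G j k) = attr G j k := by
      rw [← attr_succ, hfix]
    rw [h1, h2]
  · push_neg at hex
    exfalso
    have grow : ∀ k ≤ Fintype.card V, k + 1 ≤ (attr G j k).ncard := by
      intro k
      induction k with
      | zero =>
        intro _
        have : (attr G j 0).Nonempty := G.F_ne j
        have := Set.ncard_pos (s := attr G j 0) (Set.toFinite _) |>.mpr this
        omega
      | succ k ih =>
        intro hk
        have h1 := ih (by omega)
        have hss : attr G j k ⊂ attr G j (k + 1) :=
          ssubset_of_subset_of_ne (attr_subset_succ G j k) (fun h => (hex k (by omega) h.symm))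
        have := Set.ncard_lt_ncard hss (Set.toFinite _)
        omega
    have h1 := grow (Fintype.card V) le_rfl
    have h2 : (attr G j (Fintype.card V)).ncard ≤ Fintype.card V := by
      have := Set.ncard_le_ncard (Set.subset_univ (attr G j (Fintype.card V))) (Set.toFinite _)
      rwa [Set.ncard_univ, Nat.card_eq_fintype_card] at this
    omega

lemma notWin_jmove [Fintype V] {G : QRGame ι V} {j : ι} {v w : V}
    (hv : v ∉ win G j) (ho : G.owner v = j) (he : G.E v w) : w ∉ win G j := by
  intro hw
  apply hv
  rw [← win_fix, mem_astep]
  exact Or.inr (Or.inl ⟨ho, w, he, hw⟩)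

/-- The rank of a vertex in the attractor. -/
noncomputable def jrank (G : QRGame ι V) (j : ι) (v : V) : ℕ :=
  sInf {k | v ∈ attr G j k}

/-- Positional attractor strategy for player `j`. -/
noncomputable def jmove (G : QRGame ι V) (j : ι) (v : V) : V :=
  if h : ∃ w, G.E v w ∧ w ∈ attr G j (jrank G j v - 1) then h.choose
  else (G.total v).choose

/-- Positional punishing (avoidance) strategy of the coalition against `j`. -/
noncomputable def punish [Fintype V] (G : QRGame ι V) (j : ι) (v : V) : V :=
  if h : ∃ w, G.E v w ∧ w ∉ win G j then h.choose
  else (G.total v).choose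

lemma jmove_edge (G : QRGame ι V) (j : ι) (v : V) : G.E v (jmove G j v) := by
  by_cases h : ∃ w, G.E v w ∧ w ∈ attr G j (jrank G j v - 1)
  · rw [jmove, dif_pos h]; exact h.choose_spec.1
  · rw [jmove, dif_neg h]; exact (G.total v).choose_spec

lemma punish_edge [Fintype V] (G : QRGame ι V) (j : ι) (v : V) :
    G.E v (punish G j v) := by
  by_cases h : ∃ w, G.E v w ∧ w ∉ win G j
  · rw [punish, dif_pos h]; exact h.choose_spec.1
  · rw [punish, dif_neg h]; exact (G.total v).choose_spec

lemma jmove_spec (G : QRGame ι V) (j : ι) {v : V} {k : ℕ}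
    (hv : v ∈ attr G j (k + 1)) (hnv : v ∉ attr G j k) (ho : G.owner v = j) :
    jmove G j v ∈ attr G j k := by
  have hmid : ∃ w, G.E v w ∧ w ∈ attr G j k := by
    rw [attr_succ, mem_astep] at hv
    rcases hv with h | h | h
    · exact absurd h hnv
    · exact h.2
    · exact absurd ho h.1
  have hrank : jrank G j v = k + 1 := by
    have hle : jrank G j v ≤ k + 1 := Nat.sInf_le hv
    have hge : ¬ jrank G j v ≤ k := by
      intro hle'
      have hmem : v ∈ attr G j (jrank G j v) :=
        Nat.sInf_mem (⟨k + 1, hv⟩ : {k' | v ∈ attr G j k'}.Nonempty)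
      exact hnv (attr_mono G j hle' hmem)
    omega
  have hk1 : jrank G j v - 1 = k := by omega
  rw [← hk1] at hmid ⊢
  rw [jmove, dif_pos hmid]
  exact hmid.choose_spec.2

lemma punish_spec [Fintype V] (G : QRGame ι V) (j : ι) {v : V}
    (hv : v ∉ win G j) (ho : G.owner v ≠ j) : punish G j v ∉ win G j := by
  have hmid : ∃ w, G.E v w ∧ w ∉ win G j := by
    by_contra hc
    push_neg at hc
    apply hv
    rw [← win_fix, mem_astep]
    exact Or.inr (Or.inr ⟨ho, hc⟩)
  rw [punish, dif_pos hmid]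
  exact hmid.choose_spec.2

/-- Reachability: following `jmove`, player `j` reaches `F j` from the `k`-attractor
within `k` steps, whatever the coalition does. -/
lemma attr_reach (G : QRGame ι V) (j : ι) (π : ℕ → V) :
    ∀ (k t0 : ℕ), π t0 ∈ attr G j k →
      (∀ t, t0 ≤ t → t < t0 + k → G.owner (π t) = j → π t ∉ G.F j →
        π (t + 1) = jmove G j (π t)) →
      (∀ t, t0 ≤ t → t < t0 + k → G.owner (π t) ≠ j → G.E (π t) (π (t + 1))) →
      ∃ t, t0 ≤ t ∧ t ≤ t0 + k ∧ π t ∈ G.F j := by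
  intro k
  induction k with
  | zero => intro t0 hmem _ _; exact ⟨t0, le_rfl, by omega, hmem⟩
  | succ k ih =>
    intro t0 hmem hj hc
    by_cases hF : π t0 ∈ G.F j
    · exact ⟨t0, le_rfl, by omega, hF⟩
    by_cases hk : π t0 ∈ attr G j k
    · obtain ⟨t, h1, h2, h3⟩ := ih t0 hk
        (fun t ht ht' => hj t ht (by omega)) (fun t ht ht' => hc t ht (by omega))
      exact ⟨t, h1, by omega, h3⟩
    have hnext : π (t0 + 1) ∈ attr G j k := by
      by_cases ho : G.owner (π t0) = j
      · rw [hj t0 le_rfl (by omega) ho hF]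
        exact jmove_spec G j hmem hk ho
      · have hedge := hc t0 le_rfl (by omega) ho
        rw [attr_succ, mem_astep] at hmem
        rcases hmem with h | h | h
        · exact absurd h hk
        · exact absurd h.1 ho
        · exact h.2 _ hedge
    obtain ⟨t, h1, h2, h3⟩ := ih (t0 + 1) hnext
      (fun t ht ht' => hj t (by omega) (by omega)) (fun t ht ht' => hc t (by omega) (by omega))
    exact ⟨t, by omega, by omega, h3⟩

/-- Avoidance: if the coalition plays `punish` against `j` from outside `j`'s winning
region, the play stays outside it forever. -/
lemma win_avoid [Fintype V] (G : QRGame ι V) (j : ι) (π : ℕ → V) (t0 : ℕ)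
    (h0 : π t0 ∉ win G j)
    (hj : ∀ t, t0 ≤ t → G.owner (π t) = j → G.E (π t) (π (t + 1)))
    (hc : ∀ t, t0 ≤ t → G.owner (π t) ≠ j → π t ∉ win G j →
      π (t + 1) = punish G j (π t)) :
    ∀ t, t0 ≤ t → π t ∉ win G j := by
  intro t ht
  induction t with
  | zero =>
    have : t0 = 0 := by omega
    subst this; exact h0
  | succ t ih =>
    rcases Nat.lt_or_ge t0 (t + 1) with h | h
    · have ht' : t0 ≤ t := by omega
      have hnt := ih ht'
      by_cases ho : G.owner (π t) = j
      · exact notWin_jmove hnt ho (hj t ht' ho)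
      · rw [hc t ht' ho hnt]
        exact punish_spec G j hnt ho
    · have : t0 = t + 1 := by omega
      subst this; exact h0

end SEAux
namespace SEAux

variable {ι V : Type}

/-! ### Consistency of (reversed) histories with a fixed play -/

/-- The reversed history `[w n, …, w 1, w 0]`. -/
def wlist (w : ℕ → V) (n : ℕ) : List V := ((List.range (n + 1)).map w).reverse

lemma wlist_length (w : ℕ → V) (n : ℕ) : (wlist w n).length = n + 1 := by
  simp [wlist]

lemma wlist_succ (w : ℕ → V) (n : ℕ) : wlist w (n + 1) = w (n + 1) :: wlist w n := by
  simp [wlist, List.range_succ]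

lemma wlist_zero (w : ℕ → V) : wlist w 0 = [w 0] := rfl

lemma wlist_ne_nil (w : ℕ → V) (n : ℕ) : wlist w n ≠ [] := by
  intro h
  have := wlist_length w n
  rw [h] at this; simp at this

lemma wlist_getD (w : ℕ → V) (v₀ : V) (n : ℕ) :
    ∀ k ≤ n, (wlist w n).reverse.getD k v₀ = w k := by
  intro k hk
  have h1 : (wlist w n).reverse = (List.range (n + 1)).map w := by simp [wlist]
  rw [h1, List.getD_eq_getElem _ _ (by simp; omega)]
  simp

/-- Consistency of a reversed history with the play `rb`. -/
def ConsL (rb : ℕ → V) (v₀ : V) (h : List V) : Prop :=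
  ∀ m < h.length, h.reverse.getD m v₀ = rb m

/-- Index of the first deviation from `rb` in the history `h`. -/
noncomputable def Kdx (rb : ℕ → V) (v₀ : V) (h : List V) : ℕ :=
  sInf {m | m < h.length ∧ h.reverse.getD m v₀ ≠ rb m}

lemma getD_cons_lt (x : V) (h : List V) (v₀ : V) {m : ℕ} (hm : m < h.length) :
    (x :: h).reverse.getD m v₀ = h.reverse.getD m v₀ := by
  rw [List.reverse_cons, List.getD_append _ _ _ _ (by simpa using hm)]

lemma getD_cons_self (x : V) (h : List V) (v₀ : V) :
    (x :: h).reverse.getD h.length v₀ = x := by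
  rw [List.reverse_cons, show h.length = h.reverse.length by simp]
  exact list_getD_concat _ _ _

lemma consL_cons {rb : ℕ → V} {v₀ : V} {h : List V} (hc : ConsL rb v₀ h)
    (x : V) (hx : x = rb h.length) : ConsL rb v₀ (x :: h) := by
  intro m hm
  simp only [List.length_cons] at hm
  rcases Nat.lt_or_ge m h.length with h' | h'
  · rw [getD_cons_lt _ _ _ h']; exact hc m h'
  · have : m = h.length := by omega
    subst this
    rw [getD_cons_self]; exact hx

lemma consL_wlist (w : ℕ → V) (v₀ : V) (n : ℕ) : ConsL w v₀ (wlist w n) := by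
  intro m hm
  rw [wlist_length] at hm
  exact wlist_getD w v₀ n m (by omega)

lemma cur_of_consL {rb : ℕ → V} {v₀ : V} {h : List V} (hc : ConsL rb v₀ h)
    (hne : h ≠ []) : QRGame.cur v₀ h = rb (h.length - 1) := by
  rw [QRGame.cur, headD_eq_getD h hne v₀]
  exact hc (h.length - 1) (by
    have : 0 < h.length := List.length_pos_iff.mpr hne
    omega)

lemma eq_wlist_of_consL {rb : ℕ → V} {v₀ : V} {h : List V} (hc : ConsL rb v₀ h)
    (hne : h ≠ []) : h = wlist rb (h.length - 1) := by
  have hl : 0 < h.length := List.length_pos_iff.mpr hne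
  apply list_ext_rev_getD v₀ _ _ (by rw [wlist_length]; omega)
  intro m hm
  rw [hc m hm, wlist_getD rb v₀ _ m (by omega)]

lemma not_consL_cons {rb : ℕ → V} {v₀ : V} {h : List V} (hnc : ¬ ConsL rb v₀ h)
    (x : V) : ¬ ConsL rb v₀ (x :: h) := by
  intro hc
  exact hnc (fun m hm => by
    rw [← getD_cons_lt x h v₀ hm]
    exact hc m (by simp; omega))

lemma kdx_eq {rb : ℕ → V} {v₀ : V} {h : List V} {q : ℕ} (hq : q < h.length)
    (hne : h.reverse.getD q v₀ ≠ rb q) (hmin : ∀ m < q, h.reverse.getD m v₀ = rb m) :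
    Kdx rb v₀ h = q := by
  have h1 : Kdx rb v₀ h ≤ q := Nat.sInf_le ⟨hq, hne⟩
  have h2 : ¬ Kdx rb v₀ h < q := by
    intro hlt
    have hmem := Nat.sInf_mem (⟨q, hq, hne⟩ : {m | m < h.length ∧ h.reverse.getD m v₀ ≠ rb m}.Nonempty)
    exact hmem.2 (hmin _ hlt)
  omega

lemma not_consL_of_getD {rb : ℕ → V} {v₀ : V} {h : List V} {q : ℕ} (hq : q < h.length)
    (hne : h.reverse.getD q v₀ ≠ rb q) : ¬ ConsL rb v₀ h :=
  fun hc => hne (hc q hq)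

end SEAux
namespace SEAux

variable {ι V : Type}

lemma isHist_ne_nil {G : QRGame ι V} {v₀ : V} {h : List V} (hh : G.IsHist v₀ h) :
    h ≠ [] := by
  intro hnil
  rw [hnil] at hh
  exact hh

/-- The replay-then-attract deviation: if player `j` can reach his winning region at
step `n₀` of a play whose coalition moves are reproducible against `σ`, then he has a
deviation in the truncated game reaching his goal set, contradicting security. -/
lemma replay_reach [Fintype V] [DecidableEq ι]
    (G : QRGame ι V) (v₀ : V) (d : ℕ) (σ : ι → List V → V)
    (hstrat : ∀ i, G.IsStratTrunc v₀ d i (σ i))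
    (hsec : G.IsSecureTrunc v₀ d σ)
    (j : ι) (w : ℕ → V) (n₀ : ℕ)
    (hw0 : w 0 = v₀)
    (hn₀ : n₀ + Fintype.card V ≤ d)
    (hedge : ∀ k < n₀, G.E (w k) (w (k + 1)))
    (hcoal : ∀ k < n₀, G.owner (w k) ≠ j → σ (G.owner (w k)) (wlist w k) = w (k + 1))
    (hwin : w n₀ ∈ win G j)
    (htop : G.costLT j (G.outcome v₀ σ) (d + 1) = ⊤) : False := by
  classical
  set σ'' : List V → V := fun h =>
    if ConsL w v₀ h ∧ h.length ≤ n₀ then w h.length else jmove G j (QRGame.cur v₀ h)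
    with hσ''
  have hσ''pos : ∀ h : List V, ConsL w v₀ h → h.length ≤ n₀ → σ'' h = w h.length := by
    intro h h1 h2
    rw [hσ'']; exact if_pos ⟨h1, h2⟩
  have hσ''neg : ∀ h : List V, ¬ (ConsL w v₀ h ∧ h.length ≤ n₀) →
      σ'' h = jmove G j (QRGame.cur v₀ h) := by
    intro h h1
    rw [hσ'']; exact if_neg h1
  set s := Function.update σ j σ'' with hs
  -- validity of σ'' in the truncated game
  have hstrat'' : G.IsStratTrunc v₀ d j σ'' := by
    intro h hh hlen ho
    by_cases hcw : ConsL w v₀ h ∧ h.length ≤ n₀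
    · rw [hσ''pos h hcw.1 hcw.2, cur_of_consL hcw.1 (isHist_ne_nil hh)]
      have hpos : 0 < h.length := List.length_pos_iff.mpr (isHist_ne_nil hh)
      have := hedge (h.length - 1) (by omega)
      rwa [show h.length - 1 + 1 = h.length by omega] at this
    · rw [hσ''neg h hcw]
      exact jmove_edge G j _
  -- validity of the profile s
  have hv : ∀ h, G.IsHist v₀ h → h.length ≤ d →
      G.E (QRGame.cur v₀ h) (s (G.owner (QRGame.cur v₀ h)) h) := by
    intro h hh hlen
    by_cases ho : G.owner (QRGame.cur v₀ h) = j
    · rw [hs, ho, Function.update_self]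
      exact hstrat'' h hh hlen ho
    · rw [hs, Function.update_of_ne ho]
      exact hstrat _ h hh hlen rfl
  have hPV := play_valid G v₀ s d hv
  -- the outcome of s follows w up to n₀
  have hplay : ∀ t ≤ n₀, G.histFrom v₀ s [v₀] t = wlist w t ∧ G.outcome v₀ s t = w t := by
    intro t
    induction t with
    | zero =>
      intro _
      constructor
      · show [v₀] = wlist w 0
        rw [wlist_zero, hw0]
      · rw [outcome_zero, hw0]
    | succ t ih =>
      intro ht
      obtain ⟨hh, ho⟩ := ih (by omega)
      have hout : G.outcome v₀ s (t + 1) = w (t + 1) := by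
        rw [outcome_succ, hh, ho]
        by_cases howner : G.owner (w t) = j
        · rw [hs, howner, Function.update_self]
          rw [hσ''pos _ (consL_wlist w v₀ t) (by rw [wlist_length]; omega), wlist_length]
        · rw [hs, Function.update_of_ne howner]
          exact hcoal t (by omega) howner
      refine ⟨?_, hout⟩
      rw [histFrom_succ, cur_hist, ← outcome_succ G v₀ s t, hout, hh, wlist_succ]
  -- reach F j within card V more steps
  have hmem : G.outcome v₀ s n₀ ∈ attr G j (Fintype.card V) := by
    rw [(hplay n₀ le_rfl).2]
    exact hwin
  have hreach := attr_reach G j (G.outcome v₀ s) (Fintype.card V) n₀ hmem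
    (by
      intro t ht ht' hot hF
      rw [outcome_succ, hs, hot, Function.update_self,
        hσ''neg _ (by
          rw [hist_length]
          intro hcc
          omega), cur_hist])
    (by
      intro t ht ht' hot
      exact (hPV (n₀ + Fintype.card V) hn₀).2 t (by omega))
  obtain ⟨th, hth1, hth2, hth3⟩ := hreach
  -- contradiction with security of the truncated game
  apply hsec
  refine ⟨j, σ'', hstrat'', Or.inl ?_⟩
  have hle : G.costLT j (G.fullPlay v₀ (Function.update σ j σ'') [v₀]) (d + 1)
      ≤ (th : ℕ∞) := by
    exact costLT_le_of_mem G (by omega) hth3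
  have hlt : G.costLT j (G.fullPlay v₀ (Function.update σ j σ'') [v₀]) (d + 1) < ⊤ :=
    lt_of_le_of_lt hle (ENat.coe_lt_top th)
  have htop' : G.costLT j (G.fullPlay v₀ σ [v₀]) (d + 1) = ⊤ := htop
  show G.costLT j (G.fullPlay v₀ (Function.update σ j σ'') [v₀]) (d + 1)
    < G.costLT j (G.fullPlay v₀ σ [v₀]) (d + 1)
  rw [htop']
  exact hlt

end SEAux
namespace SEAux

variable {ι V : Type}

lemma getD_append_low (δ h : List V) (v₀ : V) {m : ℕ} (hm : m < h.length) :
    (δ ++ h).reverse.getD m v₀ = h.reverse.getD m v₀ := by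
  rw [List.reverse_append, List.getD_append _ _ _ _ (by simpa using hm)]

lemma getD_append_high (δ h : List V) (v₀ : V) {m : ℕ} (hm : h.length ≤ m) :
    (δ ++ h).reverse.getD m v₀ = δ.reverse.getD (m - h.length) v₀ := by
  rw [List.reverse_append, List.getD_append_right _ _ _ _ (by simpa using hm)]
  simp

lemma consL_append_iff {rbar : ℕ → V} {v₀ : V} (δ h : List V) :
    ConsL rbar v₀ (δ ++ h) ↔ ConsL rbar v₀ h ∧
      ∀ r < δ.length, δ.reverse.getD r v₀ = rbar (h.length + r) := by
  constructor
  · intro hc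
    constructor
    · intro m hm
      rw [← getD_append_low δ h v₀ hm]
      exact hc m (by simp; omega)
    · intro r hr
      have := hc (h.length + r) (by simp; omega)
      rwa [getD_append_high δ h v₀ (by omega), Nat.add_sub_cancel_left] at this
  · rintro ⟨h1, h2⟩ m hm
    simp only [List.length_append] at hm
    rcases Nat.lt_or_ge m h.length with h' | h'
    · rw [getD_append_low δ h v₀ h']
      exact h1 m h'
    · rw [getD_append_high δ h v₀ h']
      have := h2 (m - h.length) (by omega)
      rwa [show h.length + (m - h.length) = m by omega] at this

lemma kdx_lt_length {rbar : ℕ → V} {v₀ : V} {h : List V}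
    (hnc : ¬ ConsL rbar v₀ h) :
    Kdx rbar v₀ h < h.length ∧ h.reverse.getD (Kdx rbar v₀ h) v₀ ≠ rbar (Kdx rbar v₀ h)
      ∧ ∀ m < Kdx rbar v₀ h, h.reverse.getD m v₀ = rbar m := by
  have hne : {m | m < h.length ∧ h.reverse.getD m v₀ ≠ rbar m}.Nonempty := by
    by_contra hc
    rw [Set.not_nonempty_iff_eq_empty, Set.eq_empty_iff_forall_notMem] at hc
    exact hnc fun m hm => by
      by_contra hne'
      exact hc m ⟨hm, hne'⟩
  obtain ⟨hq1, hq2⟩ := Nat.sInf_mem hne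
  refine ⟨hq1, hq2, fun m hm => ?_⟩
  by_contra hc
  have hmlen : m < h.length := by
    have : Kdx rbar v₀ h ≤ h.length := by unfold Kdx at hm ⊢; omega
    unfold Kdx at hm
    omega
  have := Nat.sInf_le (show m ∈ {m | m < h.length ∧ h.reverse.getD m v₀ ≠ rbar m}
    from ⟨hmlen, hc⟩)
  unfold Kdx at hm
  omega

lemma kdx_append_of_not_consL {rbar : ℕ → V} {v₀ : V} {h : List V}
    (hnc : ¬ ConsL rbar v₀ h) (δ : List V) :
    Kdx rbar v₀ (δ ++ h) = Kdx rbar v₀ h := by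
  obtain ⟨h1, h2, h3⟩ := kdx_lt_length hnc
  apply kdx_eq
  · simp only [List.length_append]; omega
  · rw [getD_append_low δ h v₀ h1]
    exact h2
  · intro m hm
    rw [getD_append_low δ h v₀ (by omega)]
    exact h3 m hm

lemma kdx_append_of_consL {rbar : ℕ → V} {v₀ : V} {h δ : List V}
    (hc : ConsL rbar v₀ h) (hnc : ¬ ConsL rbar v₀ (δ ++ h)) :
    Kdx rbar v₀ (δ ++ h) = h.length +
      sInf {r | r < δ.length ∧ δ.reverse.getD r v₀ ≠ rbar (h.length + r)} := by
  have hne : {r | r < δ.length ∧ δ.reverse.getD r v₀ ≠ rbar (h.length + r)}.Nonempty := by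
    by_contra hcon
    rw [Set.not_nonempty_iff_eq_empty, Set.eq_empty_iff_forall_notMem] at hcon
    apply hnc
    rw [consL_append_iff]
    refine ⟨hc, fun r hr => ?_⟩
    by_contra hne'
    exact hcon r ⟨hr, hne'⟩
  obtain ⟨hq1, hq2⟩ := Nat.sInf_mem hne
  apply kdx_eq
  · simp only [List.length_append]; omega
  · rw [getD_append_high δ h v₀ (by omega), Nat.add_sub_cancel_left]
    exact hq2
  · intro m hm
    rcases Nat.lt_or_ge m h.length with h' | h'
    · rw [getD_append_low δ h v₀ h']
      exact hc m h'
    · rw [getD_append_high δ h v₀ h']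
      by_contra hcon
      have hmem : (m - h.length) ∈
          {r | r < δ.length ∧ δ.reverse.getD r v₀ ≠ rbar (h.length + r)} := by
        refine ⟨by omega, ?_⟩
        rwa [show h.length + (m - h.length) = m by omega]
      have := Nat.sInf_le hmem
      omega

lemma headD_append_cur (δ h : List V) (v₀ : V) (hne : h ≠ []) :
    QRGame.cur v₀ (δ ++ h) = δ.headD (QRGame.cur v₀ h) := by
  cases δ with
  | nil => simp [QRGame.cur]
  | cons d ds => simp [QRGame.cur]

/-- The strategy we construct for player `i`. -/
noncomputable def tauFun [Fintype V] (G : QRGame ι V) (v₀ : V) (σi : List V → V)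
    (rbar : ℕ → V) (D Ecut : ℕ) : List V → V := fun h =>
  if ConsL rbar v₀ h then rbar h.length
  else if Kdx rbar v₀ h ≤ D ∧ h.length ≤ Ecut then σi h
  else punish G (G.owner (rbar (Kdx rbar v₀ h - 1))) (QRGame.cur v₀ h)

lemma tauFun_cons [Fintype V] (G : QRGame ι V) (v₀ : V) (σi : List V → V)
    (rbar : ℕ → V) (D Ecut : ℕ) {h : List V} (hc : ConsL rbar v₀ h) :
    tauFun G v₀ σi rbar D Ecut h = rbar h.length := by
  rw [tauFun, if_pos hc]

lemma tauFun_mid [Fintype V] (G : QRGame ι V) (v₀ : V) (σi : List V → V)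
    (rbar : ℕ → V) (D Ecut : ℕ) {h : List V} (hnc : ¬ ConsL rbar v₀ h)
    (h1 : Kdx rbar v₀ h ≤ D) (h2 : h.length ≤ Ecut) :
    tauFun G v₀ σi rbar D Ecut h = σi h := by
  rw [tauFun, if_neg hnc, if_pos ⟨h1, h2⟩]

lemma tauFun_pun [Fintype V] (G : QRGame ι V) (v₀ : V) (σi : List V → V)
    (rbar : ℕ → V) (D Ecut : ℕ) {h : List V} (hnc : ¬ ConsL rbar v₀ h)
    (h1 : ¬ (Kdx rbar v₀ h ≤ D ∧ h.length ≤ Ecut)) :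
    tauFun G v₀ σi rbar D Ecut h
      = punish G (G.owner (rbar (Kdx rbar v₀ h - 1))) (QRGame.cur v₀ h) := by
  rw [tauFun, if_neg hnc, if_neg h1]

/-- The answer function of the finite-memory machine. -/
noncomputable def ansFun [Fintype V] (G : QRGame ι V) (v₀ : V) (σi : List V → V)
    (rbar g : ℕ → V) (D Ecut per : ℕ) :
    (List V ⊕ (Bool × ℕ × ι × V)) → List V → V := fun s δ =>
  match s with
  | Sum.inl h => tauFun G v₀ σi rbar D Ecut (δ ++ h)
  | Sum.inr (c, ph, dv, u) =>
    if c = true ∧ ∀ r < δ.length, δ.reverse.getD r v₀ = g ((ph + r) % per) then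
      g ((ph + δ.length) % per)
    else
      punish G
        (if c = true then
          G.owner (g ((ph + sInf {r | r < δ.length ∧
            δ.reverse.getD r v₀ ≠ g ((ph + r) % per)} + per - 1) % per))
        else dv)
        (δ.headD u)

/-- The state function of the finite-memory machine. -/
noncomputable def stFun [Fintype V] (G : QRGame ι V) (v₀ : V)
    (rbar : ℕ → V) (Ecut a per : ℕ) : List V → (List V ⊕ (Bool × ℕ × ι × V)) := fun h =>
  if h.length ≤ Ecut then Sum.inl h
  else Sum.inr (if ConsL rbar v₀ h then true else false, (h.length - a) % per,
    G.owner (rbar (Kdx rbar v₀ h - 1)), QRGame.cur v₀ h)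

/-- The strategies we construct have finite memory. -/
lemma finmem_tau [Fintype V] [Fintype ι] (G : QRGame ι V) (v₀ : V)
    (σi : List V → V) (rbar g : ℕ → V) (D Ecut a per : ℕ)
    (hper : 0 < per) (haE : a < Ecut)
    (hcanon : ∀ t, a ≤ t → rbar t = g ((t - a) % per)) :
    QRGame.FinMem (tauFun G v₀ σi rbar D Ecut) := by
  classical
  have hB2 : ∀ (L r : ℕ), a < L → rbar (L + r) = g (((L - a) % per + r) % per) := by
    intro L r hL
    rw [hcanon (L + r) (by omega), show L + r - a = (L - a) + r by omega,
      ← Nat.mod_add_mod]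
  have hB5 : ∀ (L r₀ : ℕ), a < L →
      rbar (L + r₀ - 1) = g (((L - a) % per + r₀ + per - 1) % per) := by
    intro L r₀ hL
    rw [hcanon (L + r₀ - 1) (by omega), show L + r₀ - 1 - a = (L - a) + r₀ - 1 by omega]
    congr 1
    have h1 : ((L - a) + r₀ - 1) % per = ((L - a) + r₀ - 1 + per) % per :=
      (Nat.add_mod_right _ _).symm
    rw [h1, show (L - a) + r₀ - 1 + per = (L - a) + (r₀ + per - 1) by omega,
      ← Nat.mod_add_mod, show (L - a) % per + (r₀ + per - 1)
        = (L - a) % per + r₀ + per - 1 by omega]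
  have key : ∀ h : List V, (fun δ : List V => tauFun G v₀ σi rbar D Ecut (δ ++ h))
      = ansFun G v₀ σi rbar g D Ecut per (stFun G v₀ rbar Ecut a per h) := by
    intro h
    funext δ
    by_cases hlen : h.length ≤ Ecut
    · rw [stFun, if_pos hlen]
      rfl
    · push_neg at hlen
      have hLa : a < h.length := by omega
      have hhne : h ≠ [] := by
        intro hc
        rw [hc] at hlen
        simp at hlen
      rw [stFun, if_neg (by omega)]
      show tauFun G v₀ σi rbar D Ecut (δ ++ h) = _
      by_cases hcons : ConsL rbar v₀ (δ ++ h)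
      · obtain ⟨hch, hδ⟩ := (consL_append_iff δ h).mp hcons
        rw [tauFun_cons _ _ _ _ _ _ hcons]
        rw [ansFun]
        rw [if_pos ⟨by rw [if_pos hch], fun r hr => by
          rw [hδ r hr, hB2 _ _ hLa]⟩]
        rw [List.length_append, show δ.length + h.length = h.length + δ.length by omega,
          hB2 _ _ hLa]
      · have hlenapp : ¬ (δ ++ h).length ≤ Ecut := by
          simp only [List.length_append]
          omega
        rw [tauFun_pun _ _ _ _ _ _ hcons (by
          intro hcc
          exact hlenapp hcc.2)]
        rw [ansFun]
        rw [if_neg (by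
          rintro ⟨hc1, hc2⟩
          apply hcons
          rw [consL_append_iff]
          have hch : ConsL rbar v₀ h := by
            by_contra hnc
            rw [if_neg hnc] at hc1
            exact Bool.false_ne_true hc1
          exact ⟨hch, fun r hr => by rw [hc2 r hr, ← hB2 _ _ hLa]⟩)]
        rw [headD_append_cur δ h v₀ hhne]
        by_cases hch : ConsL rbar v₀ h
        · rw [if_pos (by rw [if_pos hch])]
          have hkdx := kdx_append_of_consL hch hcons
          have hsets : {r | r < δ.length ∧ δ.reverse.getD r v₀
                ≠ g (((h.length - a) % per + r) % per)}
              = {r | r < δ.length ∧ δ.reverse.getD r v₀ ≠ rbar (h.length + r)} := by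
            ext r
            simp only [Set.mem_setOf_eq]
            constructor
            · rintro ⟨hr1, hr2⟩
              exact ⟨hr1, by rw [hB2 _ _ hLa]; exact hr2⟩
            · rintro ⟨hr1, hr2⟩
              exact ⟨hr1, by rw [← hB2 _ _ hLa]; exact hr2⟩
          rw [hsets, hkdx]
          congr 2
          rw [show h.length + sInf {r | r < δ.length ∧ δ.reverse.getD r v₀
              ≠ rbar (h.length + r)} - 1
            = h.length + sInf {r | r < δ.length ∧ δ.reverse.getD r v₀
              ≠ rbar (h.length + r)} - 1 from rfl]
          exact hB5 _ _ hLa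
        · rw [if_neg (by rw [if_neg hch]; exact Bool.false_ne_true)]
          rw [kdx_append_of_not_consL hch δ]
    -- conclude finiteness
  have hsub : (Set.range fun h : List V => fun δ : List V =>
        tauFun G v₀ σi rbar D Ecut (δ ++ h))
      ⊆ (ansFun G v₀ σi rbar g D Ecut per) ''
        ((Sum.inl '' {h : List V | h.length ≤ Ecut}) ∪
          (Sum.inr '' ((Set.univ : Set Bool) ×ˢ (Set.Iio per) ×ˢ
            (Set.univ : Set ι) ×ˢ (Set.univ : Set V)))) := by
    rintro f ⟨h, rfl⟩
    refine ⟨stFun G v₀ rbar Ecut a per h, ?_, (key h).symm⟩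
    by_cases hlen : h.length ≤ Ecut
    · exact Or.inl ⟨h, hlen, by rw [stFun, if_pos hlen]⟩
    · refine Or.inr ⟨_, ?_, (by rw [stFun, if_neg hlen])⟩
      refine ⟨Set.mem_univ _, ?_, Set.mem_univ _, Set.mem_univ _⟩
      exact Nat.mod_lt _ hper
  apply Set.Finite.subset _ hsub
  apply Set.Finite.image
  apply Set.Finite.union
  · exact (List.finite_length_le V Ecut).image _
  · apply Set.Finite.image
    exact (Set.finite_univ.prod ((Set.finite_Iio per).prod
      (Set.finite_univ.prod Set.finite_univ)))

end SEAux
namespace SEAux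

variable {ι V : Type}

lemma wlist_congr {w w' : ℕ → V} {n : ℕ} (h : ∀ m ≤ n, w m = w' m) :
    wlist w n = wlist w' n := by
  unfold wlist
  congr 1
  apply List.map_congr_left
  intro m hm
  rw [List.mem_range] at hm
  exact h m (by omega)

lemma hist_eq_wlist (G : QRGame ι V) (v₀ : V) (s : ι → List V → V) (t : ℕ) :
    G.histFrom v₀ s [v₀] t = wlist (G.outcome v₀ s) t := by
  apply list_ext_rev_getD v₀ _ _ (by rw [hist_length, wlist_length])
  intro m hm
  rw [hist_length] at hm
  rw [outcome_getD G v₀ s t m (by omega), wlist_getD _ v₀ t m (by omega)]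

end SEAux
/-- Let `Γ = 2·|Π|·|V|` and `d = Γ + 3·|V|`.  If there exists a goal-optimal
and dev-optimal secure equilibrium in the truncated game `𝒯^d`, then there
exists a finite-memory secure equilibrium in `(G, v₀)` with the same cost
profile. -/
theorem secure_equilibrium_from_truncated_same_costs
    {ι V : Type} [Fintype ι] [Fintype V] [DecidableEq ι]
    (G : QRGame ι V) (v₀ : V) (Γ d : ℕ)
    (hΓ : Γ = 2 * Fintype.card ι * Fintype.card V)
    (hd : d = Γ + 3 * Fintype.card V)
    (σ : ι → List V → V)
    (hstrat : ∀ i, G.IsStratTrunc v₀ d i (σ i))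
    (hsec : G.IsSecureTrunc v₀ d σ)
    (hgoal : G.GoalOptTrunc v₀ d σ Γ) (hdev : G.DevOptTrunc v₀ d σ) :
    ∃ τ : ι → List V → V, G.IsProfile v₀ τ ∧ G.IsSecure v₀ τ ∧
      (∀ i, QRGame.FinMem (τ i)) ∧
      ∀ i, G.cost i (G.outcome v₀ τ) = G.costLT i (G.outcome v₀ σ) (d + 1) := by
  classical
  open SEAux in
  rcases isEmpty_or_nonempty ι with hι | hι
  · refine ⟨fun _ _ => v₀, fun i => (IsEmpty.elim hι i), ?_,
      fun i => (IsEmpty.elim hι i), fun i => (IsEmpty.elim hι i)⟩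
    rintro ⟨j, -⟩
    exact IsEmpty.elim hι j
  -- basic cardinalities
  have hcV1 : 1 ≤ Fintype.card V := @Fintype.card_pos V _ ⟨v₀⟩
  have hcι1 : 1 ≤ Fintype.card ι := @Fintype.card_pos ι _ hι
  have hΓV : 2 * Fintype.card V ≤ Γ := by
    rw [hΓ]
    nlinarith
  -- the outcome of σ
  set ρ := G.outcome v₀ σ with hρdef
  have hρPV := SEAux.play_valid G v₀ σ d (fun h hh hlen => hstrat _ h hh hlen rfl)
  have hρE : ∀ k < d, G.E (ρ k) (ρ (k + 1)) := (hρPV d le_rfl).2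
  -- the bound M and D
  set M := (⨆ i ∈ {i : ι | G.costLT i ρ (d + 1) ≠ ⊤}, G.costLT i ρ (d + 1)).toNat with hM
  have hDdef : G.devBoundTrunc v₀ d σ = M + Fintype.card V := rfl
  set D := M + Fintype.card V with hDD
  have hsup_le : (⨆ i ∈ {i : ι | G.costLT i ρ (d + 1) ≠ ⊤}, G.costLT i ρ (d + 1))
      ≤ ((Γ - 1 : ℕ) : ℕ∞) := by
    apply iSup₂_le
    intro i hi
    obtain ⟨l, hl, hlm, _, _⟩ := SEAux.costLT_spec G hi
    have hlt := hgoal i hi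
    rw [hl] at hlt ⊢
    have hlΓ : l < Γ := by exact_mod_cast hlt
    exact Nat.cast_le.mpr (by omega)
  have hMΓ : M ≤ Γ - 1 := by
    rw [hM]
    exact ENat.toNat_le_of_le_coe hsup_le
  have hxM : ∀ i, G.costLT i ρ (d + 1) ≠ ⊤ → G.costLT i ρ (d + 1) ≤ (M : ℕ∞) := by
    intro i hi
    have h1 : G.costLT i ρ (d + 1)
        ≤ ⨆ i ∈ {i : ι | G.costLT i ρ (d + 1) ≠ ⊤}, G.costLT i ρ (d + 1) :=
      le_iSup₂ (f := fun i _ => G.costLT i ρ (d + 1)) i hi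
    have h2 : (⨆ i ∈ {i : ι | G.costLT i ρ (d + 1) ≠ ⊤}, G.costLT i ρ (d + 1)) ≠ ⊤ :=
      (lt_of_le_of_lt hsup_le (ENat.coe_lt_top _)).ne
    rw [hM, ENat.coe_toNat h2]
    exact h1
  -- pigeonhole: a repetition on the outcome after D
  obtain ⟨a, b, hDa, hab, hbD, hρab⟩ :
      ∃ a b, D ≤ a ∧ a < b ∧ b ≤ D + Fintype.card V ∧ ρ a = ρ b := by
    obtain ⟨x, y, hxy, hf⟩ := Fintype.exists_ne_map_eq_of_card_lt
      (fun k : Fin (Fintype.card V + 1) => ρ (D + (k : ℕ)))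
      (by rw [Fintype.card_fin]; omega)
    have hval : (x : ℕ) ≠ (y : ℕ) := fun hc => hxy (Fin.ext hc)
    rcases Nat.lt_or_ge (x : ℕ) (y : ℕ) with h | h
    · exact ⟨D + x, D + y, by omega, by omega, by have := y.isLt; omega, hf⟩
    · exact ⟨D + y, D + x, by omega, by omega, by have := x.isLt; omega, hf.symm⟩
  set per := b - a with hperdef
  have hper1 : 0 < per := by omega
  set Ecut := Γ + 2 * Fintype.card V with hEcutdef
  -- numeric facts
  have hbd : b + Fintype.card V < d := by omega
  have hEcd : Ecut + Fintype.card V = d := by omega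
  have haE : a < Ecut := by omega
  have hMD : M < D := by omega
  have hDEcut : D ≤ Ecut := by omega
  -- the looping play
  set rbar : ℕ → V := fun t => if t < a then ρ t else ρ (a + (t - a) % per) with hrbar
  have hrbar_canon : ∀ t, a ≤ t → rbar t = ρ (a + (t - a) % per) := by
    intro t ht
    rw [hrbar]
    exact if_neg (by omega)
  have hrbar_eq : ∀ t ≤ b, rbar t = ρ t := by
    intro t ht
    by_cases h : t < a
    · rw [hrbar]; exact if_pos h
    · push_neg at h
      rw [hrbar_canon t h]
      rcases Nat.lt_or_ge t b with h' | h'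
      · rw [Nat.mod_eq_of_lt (by omega), show a + (t - a) = t by omega]
      · have hbt : t = b := by omega
        subst hbt
        rw [show t - a = per from rfl, Nat.mod_self, Nat.add_zero]
        exact hρab
  have hrbar_occ : ∀ t, ∃ t', t' ≤ b ∧ rbar t = ρ t' := by
    intro t
    by_cases h : t < a
    · exact ⟨t, by omega, by rw [hrbar]; exact if_pos h⟩
    · refine ⟨a + (t - a) % per, ?_, hrbar_canon t (by omega)⟩
      have := Nat.mod_lt (t - a) hper1
      omega
  have hrbar_edge : ∀ t, G.E (rbar t) (rbar (t + 1)) := by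
    intro t
    rcases Nat.lt_or_ge t a with h | h
    · rw [hrbar_eq t (by omega), hrbar_eq (t + 1) (by omega)]
      exact hρE t (by omega)
    · have hrlt : (t - a) % per < per := Nat.mod_lt _ hper1
      have h2 : rbar (t + 1) = ρ (a + ((t - a) % per + 1) % per) := by
        rw [hrbar_canon (t + 1) (by omega),
          show t + 1 - a = (t - a) + 1 by omega, ← Nat.mod_add_mod]
      rw [hrbar_canon t h, h2]
      by_cases hcase : (t - a) % per + 1 < per
      · rw [Nat.mod_eq_of_lt hcase,
          show a + ((t - a) % per + 1) = (a + (t - a) % per) + 1 by omega]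
        exact hρE (a + (t - a) % per) (by omega)
      · have hpeq : (t - a) % per + 1 = per := by omega
        rw [hpeq, Nat.mod_self, Nat.add_zero, hρab,
          show b = (a + (t - a) % per) + 1 by omega]
        exact hρE (a + (t - a) % per) (by omega)
  have hrbar0 : rbar 0 = v₀ := by
    rw [hrbar_eq 0 (by omega)]
    rfl
  -- cost profile of the looping play
  have hcost_eq : ∀ i, G.cost i rbar = G.costLT i ρ (d + 1) := by
    intro i
    by_cases hx : G.costLT i ρ (d + 1) = ⊤
    · rw [hx, SEAux.cost_eq_top_iff]
      intro l hl
      obtain ⟨t', ht'b, ht'⟩ := hrbar_occ l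
      rw [ht'] at hl
      exact (SEAux.costLT_eq_top_iff G |>.mp hx) t' (by omega) hl
    · obtain ⟨l, hl, hlm, hmem, hmin⟩ := SEAux.costLT_spec G hx
      have hlM : l ≤ M := by
        have := hxM i hx
        rw [hl] at this
        exact_mod_cast this
      rw [hl, SEAux.cost_eq_coe_iff]
      exact ⟨by rw [hrbar_eq l (by omega)]; exact hmem,
        fun k hk => by rw [hrbar_eq k (by omega)]; exact hmin k hk⟩
  -- the equilibrium profile
  set τ : ι → List V → V := fun i => SEAux.tauFun G v₀ (σ i) rbar D Ecut with hτdef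
  have hτcons : ∀ (i : ι) (h : List V), SEAux.ConsL rbar v₀ h → τ i h = rbar h.length :=
    fun i h hc => SEAux.tauFun_cons G v₀ (σ i) rbar D Ecut hc
  -- outcome of τ is rbar
  have hτplay : ∀ t, G.histFrom v₀ τ [v₀] t = SEAux.wlist rbar t
      ∧ G.outcome v₀ τ t = rbar t := by
    intro t
    induction t with
    | zero =>
      constructor
      · show [v₀] = SEAux.wlist rbar 0
        rw [SEAux.wlist_zero, hrbar0]
      · rw [SEAux.outcome_zero, hrbar0]
    | succ t ih =>
      obtain ⟨hh, ho⟩ := ih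
      have hout : G.outcome v₀ τ (t + 1) = rbar (t + 1) := by
        rw [SEAux.outcome_succ, hh, hτcons _ _ (SEAux.consL_wlist rbar v₀ t),
          SEAux.wlist_length]
      exact ⟨by rw [SEAux.histFrom_succ, SEAux.cur_hist, ← SEAux.outcome_succ G v₀ τ t,
        hout, hh, SEAux.wlist_succ], hout⟩
  -- τ is a valid profile
  have hτprof : G.IsProfile v₀ τ := by
    intro i h hh ho
    have hne := SEAux.isHist_ne_nil hh
    have hpos : 0 < h.length := List.length_pos_iff.mpr hne
    by_cases hc : SEAux.ConsL rbar v₀ h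
    · rw [hτcons i h hc, SEAux.cur_of_consL hc hne]
      have := hrbar_edge (h.length - 1)
      rwa [show h.length - 1 + 1 = h.length by omega] at this
    · by_cases hk : SEAux.Kdx rbar v₀ h ≤ D ∧ h.length ≤ Ecut
      · show G.E (QRGame.cur v₀ h) (SEAux.tauFun G v₀ (σ i) rbar D Ecut h)
        rw [SEAux.tauFun_mid G v₀ (σ i) rbar D Ecut hc hk.1 hk.2]
        exact hstrat i h hh (by omega) ho
      · show G.E (QRGame.cur v₀ h) (SEAux.tauFun G v₀ (σ i) rbar D Ecut h)
        rw [SEAux.tauFun_pun G v₀ (σ i) rbar D Ecut hc hk]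
        exact SEAux.punish_edge G _ _
  refine ⟨τ, hτprof, ?_, ?_, ?_⟩
  · -- security: the main argument
    rintro ⟨j, σ', hσ', hprec⟩
    have hσ'trunc : G.IsStratTrunc v₀ d j σ' := fun h hh _ ho => hσ' h hh ho
    set s' := Function.update τ j σ' with hs'
    have hs'ne : ∀ (i : ι) (h : List V), i ≠ j → s' i h = τ i h := by
      intro i h hij
      rw [hs', Function.update_of_ne hij]
    have hXrw : (fun i => G.cost i (G.fullPlay v₀ τ [v₀])) = fun i => G.cost i rbar :=
      funext fun i => SEAux.cost_congr G (fun t => (hτplay t).2)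
    rw [hXrw] at hprec
    have hs'prof : G.IsProfile v₀ s' := by
      intro i
      rcases eq_or_ne i j with rfl | hij
      · rw [hs', Function.update_self]
        intro h hh ho
        exact hσ' h hh ho
      · intro h hh ho
        rw [hs'ne i h hij]
        exact hτprof i h hh ho
    have hπV : ∀ n, G.IsHist v₀ (G.histFrom v₀ s' [v₀] n) ∧
        ∀ k < n, G.E (G.outcome v₀ s' k) (G.outcome v₀ s' (k + 1)) := fun n =>
      SEAux.play_valid G v₀ s' n
        (fun h hh _ => hs'prof (G.owner (QRGame.cur v₀ h)) h hh rfl) n le_rfl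
    have hπE : ∀ t, G.E (G.outcome v₀ s' t) (G.outcome v₀ s' (t + 1)) :=
      fun t => (hπV (t + 1)).2 t (by omega)
    by_cases hallc : ∀ t, G.outcome v₀ s' t = rbar t
    · have hYrw : (fun i => G.cost i (G.fullPlay v₀ s' [v₀])) = fun i => G.cost i rbar :=
        funext fun i => SEAux.cost_congr G hallc
      rw [hYrw] at hprec
      rcases hprec with h | ⟨-, -, i, hi⟩
      · exact lt_irrefl _ h
      · exact lt_irrefl _ hi
    · push_neg at hallc
      have hPex : ∃ t, G.outcome v₀ s' t ≠ rbar t := hallc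
      set q := Nat.find hPex with hqdef
      have hqne : G.outcome v₀ s' q ≠ rbar q := Nat.find_spec hPex
      have hqmin : ∀ t < q, G.outcome v₀ s' t = rbar t := by
        intro t ht
        by_contra hcc
        exact Nat.find_min hPex ht hcc
      have hq1 : 1 ≤ q := by
        rcases Nat.eq_zero_or_pos q with h | h
        · exfalso
          apply hqne
          rw [h, SEAux.outcome_zero, hrbar0]
        · exact h
      set p := q - 1 with hpdef
      have hqp : q = p + 1 := by omega
      have hπhist_eq : ∀ t < q, G.histFrom v₀ s' [v₀] t = SEAux.wlist rbar t := by
        intro t ht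
        rw [SEAux.hist_eq_wlist G v₀ s' t]
        exact SEAux.wlist_congr (fun m hm => hqmin m (by omega))
      have howner : G.owner (rbar p) = j := by
        by_contra ho
        apply hqne
        rw [hqp, SEAux.outcome_succ, hπhist_eq p (by omega), hqmin p (by omega), hs',
          Function.update_of_ne ho, hτcons _ _ (SEAux.consL_wlist rbar v₀ p),
          SEAux.wlist_length]
      have hhist_ncons : ∀ t, q ≤ t → ¬ SEAux.ConsL rbar v₀ (G.histFrom v₀ s' [v₀] t) := by
        intro t ht
        exact SEAux.not_consL_of_getD (q := q) (by rw [SEAux.hist_length]; omega)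
          (by rw [SEAux.outcome_getD G v₀ s' t q (by omega)]; exact hqne)
      have hkdx : ∀ t, q ≤ t → SEAux.Kdx rbar v₀ (G.histFrom v₀ s' [v₀] t) = q := by
        intro t ht
        apply SEAux.kdx_eq
        · rw [SEAux.hist_length]; omega
        · rw [SEAux.outcome_getD G v₀ s' t q (by omega)]; exact hqne
        · intro m hm
          rw [SEAux.outcome_getD G v₀ s' t m (by omega)]
          exact hqmin m hm
      have hτafter : ∀ (i : ι) (t : ℕ), q ≤ t →
          τ i (G.histFrom v₀ s' [v₀] t) =
            if q ≤ D ∧ t + 1 ≤ Ecut then σ i (G.histFrom v₀ s' [v₀] t)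
            else punish G j (G.outcome v₀ s' t) := by
        intro i t ht
        by_cases hcase : q ≤ D ∧ t + 1 ≤ Ecut
        · rw [if_pos hcase]
          exact SEAux.tauFun_mid G v₀ (σ i) rbar D Ecut (hhist_ncons t ht)
            (by rw [hkdx t ht]; exact hcase.1) (by rw [SEAux.hist_length]; exact hcase.2)
        · rw [if_neg hcase]
          have hthis := SEAux.tauFun_pun G v₀ (σ i) rbar D Ecut (hhist_ncons t ht)
            (by rw [hkdx t ht, SEAux.hist_length]; exact hcase)
          rw [hkdx t ht, show q - 1 = p by omega, howner, SEAux.cur_hist] at hthis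
          exact hthis
      have hσρhist : ∀ t, G.histFrom v₀ σ [v₀] t = SEAux.wlist ρ t :=
        fun t => SEAux.hist_eq_wlist G v₀ σ t
      -- the deviation against σ itself produces the same play up to Ecut
      have hagree : q ≤ D → ∀ n ≤ Ecut,
          G.histFrom v₀ (Function.update σ j σ') [v₀] n = G.histFrom v₀ s' [v₀] n := by
        intro hqD n hn
        symm
        apply SEAux.hist_congr G v₀ s' (Function.update σ j σ') n
        intro k hk
        rcases eq_or_ne (G.owner (G.outcome v₀ s' k)) j with ho | ho
        · rw [ho, hs', Function.update_self, Function.update_self]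
        · rw [hs'ne _ _ ho, Function.update_of_ne ho]
          rcases Nat.lt_or_ge k q with hkq | hkq
          · have hkp : k ≠ p := by
              intro hkp
              apply ho
              rw [hkp, hqmin p (by omega)]
              exact howner
            have hk1q : k + 1 < q := by omega
            rw [hπhist_eq k hkq, hτcons _ _ (SEAux.consL_wlist rbar v₀ k),
              SEAux.wlist_length]
            have hwr : SEAux.wlist rbar k = G.histFrom v₀ σ [v₀] k := by
              rw [hσρhist k]
              exact SEAux.wlist_congr (fun m hm => hrbar_eq m (by omega))
            rw [hwr]
            have hown2 : G.outcome v₀ s' k = G.outcome v₀ σ k := by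
              rw [hqmin k hkq, hrbar_eq k (by omega), hρdef]
            rw [hown2, hrbar_eq (k + 1) (by omega), hρdef]
            exact SEAux.outcome_succ G v₀ σ k
          · rw [hτafter _ k hkq, if_pos ⟨hqD, by omega⟩]
      have hagree_out : q ≤ D → ∀ k ≤ Ecut,
          G.outcome v₀ (Function.update σ j σ') k = G.outcome v₀ s' k := by
        intro hqD k hk
        rw [SEAux.outcome_def, SEAux.outcome_def, hagree hqD k hk]
      -- when the deviator's cost on the main play is infinite, no vertex of the
      -- main play lies in his winning region
      have hnp : G.cost j rbar = ⊤ → ∀ t'' ≤ b, ρ t'' ∉ win G j := by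
        intro hxj t'' ht'' hwin
        have htopτ : G.costLT j ρ (d + 1) = ⊤ := by rw [← hcost_eq j]; exact hxj
        apply SEAux.replay_reach G v₀ d σ hstrat hsec j ρ t''
          (SEAux.outcome_zero G v₀ σ) (by omega) (fun k hk => hρE k (by omega))
          ?_ hwin htopτ
        intro k hk _
        rw [← hσρhist k, hρdef]
        exact (SEAux.outcome_succ G v₀ σ k).symm
      -- case analysis on the type of profitable deviation
      have hprec' : Prec j (fun i => G.cost i rbar)
          (fun i => G.cost i (G.outcome v₀ s')) := hprec
      rcases hprec' with hlt | ⟨hjeq, hallle, hex⟩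
      · -- the deviator strictly improves
        have hlt' : G.cost j (G.outcome v₀ s') < G.cost j rbar := hlt
        by_cases hxj : G.cost j rbar = ⊤
        · -- infinite cost on the main play: he can never reach his goal
          have hyne : G.cost j (G.outcome v₀ s') ≠ ⊤ := by
            rw [hxj] at hlt'
            exact hlt'.ne
          obtain ⟨l, hl, hlmem, hlmin⟩ := SEAux.cost_spec G hyne
          have htopτ : G.costLT j ρ (d + 1) = ⊤ := by rw [← hcost_eq j]; exact hxj
          have hWinex : ∃ t, G.outcome v₀ s' t ∈ win G j :=
            ⟨l, SEAux.F_subset_win G j hlmem⟩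
          set tw := Nat.find hWinex with htwdef
          have htw_mem : G.outcome v₀ s' tw ∈ win G j := Nat.find_spec hWinex
          have htw_min : ∀ t < tw, G.outcome v₀ s' t ∉ win G j :=
            fun t ht => Nat.find_min hWinex ht
          have htwq : q ≤ tw := by
            by_contra hcon
            push_neg at hcon
            obtain ⟨t'', ht''b, hocc⟩ := hrbar_occ tw
            apply hnp hxj t'' ht''b
            rw [← hocc, ← hqmin tw hcon]
            exact htw_mem
          have hpq_nw : G.outcome v₀ s' q ∉ win G j := by
            have hpnw : G.outcome v₀ s' p ∉ win G j := by
              obtain ⟨t'', ht''b, hocc⟩ := hrbar_occ p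
              rw [hqmin p (by omega), hocc]
              exact hnp hxj t'' ht''b
            have hoj : G.owner (G.outcome v₀ s' p) = j := by
              rw [hqmin p (by omega)]
              exact howner
            have hnm := SEAux.notWin_jmove hpnw hoj (hπE p)
            rwa [← hqp] at hnm
          by_cases hqD : q ≤ D
          · by_cases htwE : tw ≤ Ecut
            · -- replay the deviation in the truncated game and attract
              apply SEAux.replay_reach G v₀ d σ hstrat hsec j (G.outcome v₀ s') tw
                (SEAux.outcome_zero G v₀ s') (by omega) (fun k hk => hπE k)
                ?_ htw_mem htopτ
              intro k hk hko
              rw [← SEAux.hist_eq_wlist G v₀ s' k]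
              rcases Nat.lt_or_ge k q with hkq | hkq
              · have hkp : k ≠ p := by
                  intro hkp
                  apply hko
                  rw [hkp, hqmin p (by omega)]
                  exact howner
                have hk1q : k + 1 < q := by omega
                have h1 : G.histFrom v₀ s' [v₀] k = G.histFrom v₀ σ [v₀] k := by
                  rw [hπhist_eq k hkq, hσρhist k]
                  exact SEAux.wlist_congr (fun m hm => hrbar_eq m (by omega))
                have hown2 : G.outcome v₀ s' k = G.outcome v₀ σ k := by
                  rw [hqmin k hkq, hrbar_eq k (by omega), hρdef]
                rw [h1, hown2, hqmin (k + 1) hk1q, hrbar_eq (k + 1) (by omega), hρdef]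
                exact (SEAux.outcome_succ G v₀ σ k).symm
              · have h1 : G.outcome v₀ s' (k + 1)
                    = τ (G.owner (G.outcome v₀ s' k)) (G.histFrom v₀ s' [v₀] k) := by
                  rw [SEAux.outcome_succ, hs'ne _ _ hko]
                rw [h1, hτafter _ k hkq, if_pos ⟨hqD, by omega⟩]
            · -- the deviation never enters the winning region before Ecut,
              -- and is punished afterwards
              push_neg at htwE
              have hnever := SEAux.win_avoid G j (G.outcome v₀ s') Ecut
                (htw_min Ecut (by omega))
                (fun t ht hoj => hπE t)
                (by
                  intro t ht hoj hnw
                  rw [SEAux.outcome_succ, hs'ne _ _ hoj, hτafter _ t (by omega),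
                    if_neg (by
                      rintro ⟨-, hcc⟩
                      omega)])
              exact hnever tw (by omega) htw_mem
          · -- late deviation: punished immediately
            push_neg at hqD
            have hnever := SEAux.win_avoid G j (G.outcome v₀ s') q hpq_nw
              (fun t ht hoj => hπE t)
              (by
                intro t ht hoj hnw
                rw [SEAux.outcome_succ, hs'ne _ _ hoj, hτafter _ t ht,
                  if_neg (by
                    rintro ⟨hcc, -⟩
                    omega)])
            exact hnever tw htwq htw_mem
        · -- finite cost: transfer to dev-optimality
          obtain ⟨m₀, hm₀, hm₀mem, hm₀min⟩ := SEAux.cost_spec G hxj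
          have hm₀M : m₀ ≤ M := by
            have h1 : G.costLT j ρ (d + 1) ≠ ⊤ := by rw [← hcost_eq j]; exact hxj
            have h2 := hxM j h1
            rw [← hcost_eq j, hm₀] at h2
            exact_mod_cast h2
          have hyne : G.cost j (G.outcome v₀ s') ≠ ⊤ := by
            intro hcc
            rw [hcc] at hlt'
            exact not_top_lt hlt'
          obtain ⟨l, hl, hlmem, hlmin⟩ := SEAux.cost_spec G hyne
          have hlm₀ : l < m₀ := by
            rw [hm₀, hl] at hlt'
            exact_mod_cast hlt'
          have hql : q ≤ l := by
            by_contra hcon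
            push_neg at hcon
            apply hm₀min l hlm₀
            rw [← hqmin l hcon]
            exact hlmem
          have hqD : q ≤ D := by omega
          apply hdev j σ' hσ'trunc
          rw [hDdef]
          left
          show G.costLT j (G.outcome v₀ (Function.update σ j σ')) D < G.costLT j ρ D
          have hXj : G.costLT j ρ D = (m₀ : ℕ∞) := by
            have h1 : G.costLT j ρ (d + 1) = (m₀ : ℕ∞) := by
              rw [← hcost_eq j]
              exact hm₀
            exact SEAux.costLT_shrink G (by omega) h1 (by omega)
          have hYj : G.costLT j (G.outcome v₀ (Function.update σ j σ')) D ≤ (l : ℕ∞) := by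
            apply SEAux.costLT_le_of_mem G (by omega)
            rw [hagree_out hqD l (by omega)]
            exact hlmem
          rw [hXj]
          exact lt_of_le_of_lt hYj (by exact_mod_cast hlm₀)
      · -- Pareto-worsening deviation: transfer to dev-optimality
        have hjeq' : G.cost j rbar = G.cost j (G.outcome v₀ s') := hjeq
        have hallle' : ∀ i, G.cost i rbar ≤ G.cost i (G.outcome v₀ s') := hallle
        obtain ⟨i₀, hi₀⟩ := hex
        have hi₀' : G.cost i₀ rbar < G.cost i₀ (G.outcome v₀ s') := hi₀
        have hxi₀ : G.cost i₀ rbar ≠ ⊤ := fun hcc => not_top_lt (hcc ▸ hi₀')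
        obtain ⟨m₀, hm₀, hm₀mem, hm₀min⟩ := SEAux.cost_spec G hxi₀
        have hvM_of : ∀ (i : ι) (v : ℕ), G.cost i rbar = (v : ℕ∞) → v ≤ M := by
          intro i v hv
          have h1 : G.costLT i ρ (d + 1) ≠ ⊤ := by
            rw [← hcost_eq i, hv]
            exact ENat.coe_ne_top v
          have h2 := hxM i h1
          rw [← hcost_eq i, hv] at h2
          exact_mod_cast h2
        have hm₀M : m₀ ≤ M := hvM_of i₀ m₀ hm₀
        have hqm₀ : q ≤ m₀ := by
          by_contra hcon
          push_neg at hcon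
          have hle : G.cost i₀ (G.outcome v₀ s') ≤ (m₀ : ℕ∞) :=
            SEAux.cost_le_of_mem G (by rw [hqmin m₀ hcon]; exact hm₀mem)
          rw [hm₀] at hi₀'
          exact absurd (lt_of_lt_of_le hi₀' hle) (lt_irrefl _)
        have hqD : q ≤ D := by omega
        have hXfin : ∀ (i : ι) (v : ℕ), G.cost i rbar = (v : ℕ∞) → v ≤ M →
            G.costLT i ρ D = (v : ℕ∞) := by
          intro i v hv hvM
          have h1 : G.costLT i ρ (d + 1) = (v : ℕ∞) := by
            rw [← hcost_eq i]
            exact hv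
          exact SEAux.costLT_shrink G (by omega) h1 (by omega)
        have hXtop : ∀ i, G.cost i rbar = ⊤ → G.costLT i ρ D = ⊤ := by
          intro i hv
          have h1 : G.costLT i ρ (d + 1) = ⊤ := by rw [← hcost_eq i]; exact hv
          rw [SEAux.costLT_eq_top_iff] at h1 ⊢
          intro lx hlx
          exact h1 lx (by omega)
        have hYeq_pre : ∀ k < D, G.outcome v₀ (Function.update σ j σ') k
            = G.outcome v₀ s' k := fun k hk => hagree_out hqD k (by omega)
        have hYfin : ∀ (i : ι) (u : ℕ), G.cost i (G.outcome v₀ s') = (u : ℕ∞) → u < D →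
            G.costLT i (G.outcome v₀ (Function.update σ j σ')) D = (u : ℕ∞) := by
          intro i u hu huD
          rw [SEAux.cost_eq_coe_iff] at hu
          rw [SEAux.costLT_eq_coe_iff]
          exact ⟨huD, by rw [hYeq_pre u huD]; exact hu.1,
            fun k hk => by rw [hYeq_pre k (by omega)]; exact hu.2 k hk⟩
        have hYtop : ∀ i : ι, ((D : ℕ∞) ≤ G.cost i (G.outcome v₀ s')) →
            G.costLT i (G.outcome v₀ (Function.update σ j σ')) D = ⊤ := by
          intro i hDle
          rw [SEAux.costLT_eq_top_iff]
          intro lx hlx hmem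
          rw [hYeq_pre lx hlx] at hmem
          have h1 := SEAux.cost_le_of_mem G hmem
          have h2 : (D : ℕ∞) ≤ (lx : ℕ∞) := le_trans hDle h1
          exact absurd (by exact_mod_cast h2 : D ≤ lx) (by omega)
        apply hdev j σ' hσ'trunc
        rw [hDdef]
        right
        refine ⟨?_, ?_, i₀, ?_⟩
        · show G.costLT j ρ D = G.costLT j (G.outcome v₀ (Function.update σ j σ')) D
          by_cases hxj : G.cost j rbar = ⊤
          · rw [hXtop j hxj, hYtop j (by rw [← hjeq', hxj]; exact le_top)]
          · obtain ⟨v, hv, -, -⟩ := SEAux.cost_spec G hxj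
            have hvM := hvM_of j v hv
            rw [hXfin j v hv hvM, hYfin j v (by rw [← hjeq']; exact hv) (by omega)]
        · intro i
          show G.costLT i ρ D ≤ G.costLT i (G.outcome v₀ (Function.update σ j σ')) D
          by_cases hxi : G.cost i rbar = ⊤
          · have hyi : G.cost i (G.outcome v₀ s') = ⊤ := top_le_iff.mp (hxi ▸ hallle' i)
            rw [hXtop i hxi, hYtop i (by rw [hyi]; exact le_top)]
          · obtain ⟨v, hv, -, -⟩ := SEAux.cost_spec G hxi
            have hvM := hvM_of i v hv
            rw [hXfin i v hv hvM]
            by_cases hyi : G.cost i (G.outcome v₀ s') = ⊤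
            · rw [hYtop i (by rw [hyi]; exact le_top)]
              exact le_top
            · obtain ⟨u, hu, -, -⟩ := SEAux.cost_spec G hyi
              have hvu : v ≤ u := by
                have h3 := hallle' i
                rw [hv, hu] at h3
                exact_mod_cast h3
              rcases Nat.lt_or_ge u D with huD | huD
              · rw [hYfin i u hu huD]
                exact_mod_cast hvu
              · rw [hYtop i (by rw [hu]; exact_mod_cast huD)]
                exact le_top
        · show G.costLT i₀ ρ D < G.costLT i₀ (G.outcome v₀ (Function.update σ j σ')) D
          rw [hXfin i₀ m₀ hm₀ hm₀M]
          by_cases hyi : G.cost i₀ (G.outcome v₀ s') = ⊤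
          · rw [hYtop i₀ (by rw [hyi]; exact le_top)]
            exact ENat.coe_lt_top _
          · obtain ⟨u, hu, -, -⟩ := SEAux.cost_spec G hyi
            have hmu : m₀ < u := by
              rw [hm₀, hu] at hi₀'
              exact_mod_cast hi₀'
            rcases Nat.lt_or_ge u D with huD | huD
            · rw [hYfin i₀ u hu huD]
              exact_mod_cast hmu
            · rw [hYtop i₀ (by rw [hu]; exact_mod_cast huD)]
              exact ENat.coe_lt_top _
  · -- finite memory
    intro i
    show QRGame.FinMem (SEAux.tauFun G v₀ (σ i) rbar D Ecut)
    exact SEAux.finmem_tau G v₀ (σ i) rbar (fun r => ρ (a + r)) D Ecut a per hper1 haE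
      hrbar_canon
  · -- cost profile
    intro i
    rw [SEAux.cost_congr G (fun t => (hτplay t).2)]
    exact hcost_eq i
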